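/- In the latent Gaussian model, let f̂ be a Vecchia approximation of x = (z_o, y_o, y_p) in which no y_p-variable conditions on any y_o-variable and no z_o-variable or y_o-variable conditions on any y_p-variable (as in RF-stand and RF-ind). Then ∫ f̂(x) dy_o = f̃(z_o, y_p), where f̃ is the Vecchia approximation of the reduced vector (z_o, y_p) obtained with the same conditioning sets (y_o removed from x); consequently, the implied Vecchia conditional f̂(y_p | z_o) coincides with the conditional f̃(y_p | z_o) from the reduced approximation. (Lemma used in the proof of Proposition 2, part 5, and underlying the computational simplification of RF-stand.) -/

import Mathlib

open MeasureTheory Real Finset Matrix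

noncomputable section

/-- Density of the one-dimensional normal distribution `N(μ, v)` evaluated at `t`. -/
def gauss1 (μ v t : ℝ) : ℝ :=
  (Real.sqrt (2 * π * v))⁻¹ * Real.exp (-((t - μ) ^ 2) / (2 * v))

variable {ι : Type*} [Fintype ι] [DecidableEq ι]

/-- Joint density of the multivariate normal distribution `N(μ, K)` on `ι → ℝ`. -/
def gaussDensity (μ : ι → ℝ) (K : Matrix ι ι ℝ) (x : ι → ℝ) : ℝ :=
  (Real.sqrt ((2 * π) ^ (Fintype.card ι) * K.det))⁻¹ *
    Real.exp (-(dotProduct (x - μ) (K⁻¹ *ᵥ (x - μ))) / 2)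

/-- Submatrix of `K` with rows and columns in the index set `G`. -/
def subm (K : Matrix ι ι ℝ) (G : Finset ι) : Matrix G G ℝ :=
  Matrix.of fun j k => K j.1 k.1

/-- Gaussian conditional mean `E(x i | x_G)` for `x ~ N(μ, K)`, as a function of `x`. -/
def condMean (μ : ι → ℝ) (K : Matrix ι ι ℝ) (i : ι) (G : Finset ι) (x : ι → ℝ) : ℝ :=
  μ i + dotProduct (fun j : G => K i j.1)
    ((subm K G)⁻¹ *ᵥ fun j : G => x j.1 - μ j.1)

/-- Gaussian conditional variance `Var(x i | x_G)` for `x ~ N(μ, K)`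
(it does not depend on the value of `x_G`). -/
def condVar (K : Matrix ι ι ℝ) (i : ι) (G : Finset ι) : ℝ :=
  K i i - dotProduct (fun j : G => K i j.1)
    ((subm K G)⁻¹ *ᵥ fun j : G => K j.1 i)

/-- Gaussian conditional covariance `Cov(x a, x b | x_G)` for `x ~ N(0, K)`. -/
def condCov (K : Matrix ι ι ℝ) (a b : ι) (G : Finset ι) : ℝ :=
  K a b - dotProduct (fun j : G => K a j.1)
    ((subm K G)⁻¹ *ᵥ fun j : G => K j.1 b)

/-- The exact Gaussian conditional density `f(x i | x_G)` for `x ~ N(μ, K)`. -/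
def condDens (μ : ι → ℝ) (K : Matrix ι ι ℝ) (i : ι) (G : Finset ι) (x : ι → ℝ) : ℝ :=
  gauss1 (condMean μ K i G x) (condVar K i G) (x i)

/-- The general Vecchia approximation `f̂(x) = ∏ i, f(x i | x_{g i})` of `N(μ, K)`. -/
def vecchia (μ : ι → ℝ) (K : Matrix ι ι ℝ) (g : ι → Finset ι) (x : ι → ℝ) : ℝ :=
  ∏ i, condDens μ K i (g i) x

/-- Kullback–Leibler divergence `KL(f ‖ g) = ∫ f log(f/g)` between densities on `ι → ℝ`. -/
def KLdiv (f g : (ι → ℝ) → ℝ) : ℝ :=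
  ∫ x : ι → ℝ, f x * Real.log (f x / g x)



/-! ### Auxiliary lemmas -/

attribute [-instance] Fintype.subtypeEq

lemma gauss1_nonneg (μ v t : ℝ) : 0 ≤ gauss1 μ v t := by
  unfold gauss1; positivity

lemma gauss1_eq_pdf (μ : ℝ) {v : ℝ} (hv : 0 < v) (t : ℝ) :
    gauss1 μ v t = ProbabilityTheory.gaussianPDFReal μ v.toNNReal t := by
  unfold gauss1 ProbabilityTheory.gaussianPDFReal
  rw [Real.coe_toNNReal v hv.le]

lemma lintegral_gauss1 (μ : ℝ) {v : ℝ} (hv : 0 < v) :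
    ∫⁻ t : ℝ, ENNReal.ofReal (gauss1 μ v t) = 1 := by
  simp_rw [gauss1_eq_pdf μ hv]
  exact ProbabilityTheory.lintegral_gaussianPDFReal_eq_one μ
    (by simp [hv, hv.le, Real.toNNReal_eq_zero, not_le])

lemma measurable_gauss1 {α : Type*} [MeasurableSpace α] {f g : α → ℝ} (hf : Measurable f)
    (hg : Measurable g) (v : ℝ) : Measurable fun a => gauss1 (f a) v (g a) := by
  unfold gauss1
  exact measurable_const.mul ((((hg.sub hf).pow_const 2).neg.div_const (2 * v)).exp)

lemma sum_extend {m ι : Type*} [Fintype m] [Fintype ι] [DecidableEq ι] {f : m → ι}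
    (hf : Function.Injective f) (x : m → ℝ) (c : ι → ℝ) :
    ∑ a, Function.extend f x 0 a * c a = ∑ a', x a' * c (f a') := by
  rw [← Finset.sum_subset (Finset.subset_univ (Finset.univ.image f))]
  · rw [Finset.sum_image (fun a _ b _ h => hf h)]
    simp [hf.extend_apply]
  · intro a _ ha
    rw [Function.extend_apply' _ _ _ (fun h => ha (by
      obtain ⟨b, rfl⟩ := h; exact Finset.mem_image_of_mem f (Finset.mem_univ b)))]
    simp

lemma posDef_submatrix_inj {m ι : Type*} [Fintype m] [Fintype ι] [DecidableEq m] [DecidableEq ι]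
    {K : Matrix ι ι ℝ} (hK : K.PosDef) {f : m → ι} (hf : Function.Injective f) :
    (K.submatrix f f).PosDef := by
  refine Matrix.PosDef.of_dotProduct_mulVec_pos ?_ ?_
  · have h1 := hK.1
    unfold Matrix.IsHermitian at *
    rw [Matrix.conjTranspose_submatrix, h1]
  · intro x hx
    have hy : Function.extend f x 0 ≠ 0 := by
      obtain ⟨a, ha⟩ := Function.ne_iff.mp hx
      intro h
      apply ha
      have := congrFun h (f a)
      rwa [hf.extend_apply] at this
    have := hK.dotProduct_mulVec_pos hy
    have key : dotProduct (star (Function.extend f x 0)) (K *ᵥ Function.extend f x 0) =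
        dotProduct (star x) (K.submatrix f f *ᵥ x) := by
      simp only [star_trivial, dotProduct, Matrix.mulVec, Matrix.submatrix_apply]
      rw [sum_extend hf]
      refine Finset.sum_congr rfl fun a' _ => ?_
      congr 1
      calc (K *ᵥ Function.extend f x 0) (f a')
          = ∑ b, Function.extend f x 0 b * K (f a') b := by
            simp [Matrix.mulVec, dotProduct, mul_comm]
        _ = ∑ b', x b' * K (f a') (f b') := sum_extend hf _ _
        _ = _ := by
            simp [Matrix.mulVec, dotProduct, Matrix.submatrix_apply, mul_comm]
    rwa [key] at this

omit [Fintype ι] [DecidableEq ι] in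
lemma posDef_entry_pos {M : Matrix ι ι ℝ} [Fintype ι] [DecidableEq ι]
    (hM : M.PosDef) (i : ι) : 0 < M i i := by
  have := hM.dotProduct_mulVec_pos (x := Pi.single i 1) (by intro h; simpa using congrFun h i)
  simpa [dotProduct, Matrix.mulVec, Pi.single_apply] using this

omit [Fintype ι] [DecidableEq ι] in
lemma sym_of_posDef {M : Matrix ι ι ℝ} [Fintype ι] (hM : M.PosDef) (a b : ι) : M a b = M b a := by
  have := congrFun (congrFun hM.1 a) b
  simp only [Matrix.conjTranspose_apply, star_trivial] at this
  exact this.symm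

lemma condVar_pos {M : Matrix ι ι ℝ} (hM : M.PosDef) {i : ι} {G : Finset ι} (hi : i ∉ G) :
    0 < condVar M i G := by
  classical
  set f : (↥G ⊕ Unit) → ι := Sum.elim Subtype.val (fun _ => i) with hf
  have hfinj : Function.Injective f := by
    rintro (a | a) (b | b) h
    · exact congrArg Sum.inl (Subtype.ext h)
    · exact absurd h.symm.symm (by simpa [hf] using fun hh : a.1 = i => hi (hh ▸ a.2))
    · exact absurd h (by simpa [hf] using fun hh : i = b.1 => hi (hh ▸ b.2))
    · simp
  have hM' : (M.submatrix f f).PosDef := posDef_submatrix_inj hM hfinj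
  set A : Matrix (↥G) (↥G) ℝ := subm M G with hA
  set B : Matrix (↥G) Unit ℝ := Matrix.of fun j _ => M j.1 i with hB
  set Dm : Matrix Unit Unit ℝ := Matrix.of fun _ _ => M i i with hDm
  have hblock : M.submatrix f f = Matrix.fromBlocks A B Bᴴ Dm := by
    ext (a | a) (b | b)
    · rfl
    · rfl
    · simp [hf, Matrix.fromBlocks, Matrix.conjTranspose_apply, hB, sym_of_posDef hM i b.1]
    · rfl
  have hApos : A.PosDef := posDef_submatrix_inj hM (fun a b h => Subtype.ext h)
  haveI : Invertible A := hApos.isUnit.invertible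
  rw [hblock] at hM'
  set y : Unit → ℝ := fun _ => 1 with hy
  have hyne : (-((A⁻¹ * B) *ᵥ y) ⊕ᵥ y) ≠ 0 := by
    intro h
    have := congrFun h (Sum.inr ())
    simp [hy] at this
  have hq := hM'.dotProduct_mulVec_pos hyne
  rw [dotProduct_mulVec,
    Matrix.schur_complement_eq₁₁ B Dm _ _ hApos.1, neg_add_cancel] at hq
  simp only [star_trivial, Matrix.zero_vecMul, zero_dotProduct, zero_add] at hq
  have key : dotProduct (star y) ((Dm - Bᴴ * A⁻¹ * B) *ᵥ y) = condVar M i G := by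
    have h1 : ∀ k : ↥G, M i k.1 = M k.1 i := fun k => sym_of_posDef hM i k.1
    simp only [hy, star_trivial, condVar, hDm, hB, dotProduct, Matrix.mulVec,
      Matrix.sub_apply, Matrix.mul_apply, Matrix.conjTranspose_apply, Matrix.of_apply,
      Finset.sum_mul, Finset.mul_sum, mul_one, one_mul, star_trivial,
      Fintype.univ_punit, Finset.sum_singleton, hA]
    rw [Finset.sum_comm]
    congr 1
    refine Finset.sum_congr rfl fun k _ => ?_
    rw [h1 k]
    refine Finset.sum_congr rfl fun j _ => ?_
    ring
  rw [dotProduct_mulVec] at key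
  simp only [star_trivial] at key
  rwa [key] at hq

lemma condMean_congr (μ : ι → ℝ) (K : Matrix ι ι ℝ) (i : ι) (G : Finset ι) {x x' : ι → ℝ}
    (h : ∀ u ∈ G, x u = x' u) : condMean μ K i G x = condMean μ K i G x' := by
  have hfun : (fun j : G => x j.1 - μ j.1) = fun j : G => x' j.1 - μ j.1 := by
    funext j; rw [h j.1 j.2]
  unfold condMean
  rw [hfun]

lemma condDens_congr (μ : ι → ℝ) (K : Matrix ι ι ℝ) (i : ι) (G : Finset ι) {x x' : ι → ℝ}
    (h : ∀ u ∈ G, x u = x' u) (hi : x i = x' i) :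
    condDens μ K i G x = condDens μ K i G x' := by
  unfold condDens
  rw [condMean_congr μ K i G h, hi]

omit [Fintype ι] in
lemma measurable_condMean_comp {α : Type*} [MeasurableSpace α] (μ : ι → ℝ) (K : Matrix ι ι ℝ)
    (i : ι) (G : Finset ι) {X : α → ι → ℝ} (hX : Measurable X) :
    Measurable fun a => condMean μ K i G (X a) := by
  unfold condMean dotProduct Matrix.mulVec
  refine measurable_const.add (Finset.measurable_sum _ fun j _ => ?_)
  refine Measurable.const_mul ?_ _
  exact Finset.measurable_sum _ fun k _ =>
    (((measurable_pi_apply (k.1 : ι)).comp hX).sub measurable_const).const_mul _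

omit [Fintype ι] in
lemma measurable_condDens_comp {α : Type*} [MeasurableSpace α] (μ : ι → ℝ) (K : Matrix ι ι ℝ)
    (i : ι) (G : Finset ι) {X : α → ι → ℝ} (hX : Measurable X) :
    Measurable fun a => condDens μ K i G (X a) :=
  measurable_gauss1 (measurable_condMean_comp μ K i G hX)
    ((measurable_pi_apply i).comp hX) _

lemma seq_lintegral (N : ℕ) : ∀ (σ : Type) [Fintype σ] [LinearOrder σ], Fintype.card σ = N →
    ∀ (m : σ → (σ → ℝ) → ℝ) (v : σ → ℝ), (∀ j, 0 < v j) →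
    (∀ j, Measurable (m j)) →
    (∀ j (w w' : σ → ℝ), (∀ k, k < j → w k = w' k) → m j w = m j w') →
    ∫⁻ w : σ → ℝ, ENNReal.ofReal (∏ j, gauss1 (m j w) (v j) (w j)) = 1 := by
  induction N with
  | zero =>
    intro σ _ _ hcard m v hv hm hdep
    haveI : IsEmpty σ := Fintype.card_eq_zero_iff.mp hcard
    simp only [Finset.univ_eq_empty, Finset.prod_empty, ENNReal.ofReal_one]
    rw [lintegral_const, one_mul]
    rw [show (volume : Measure (σ → ℝ)) = Measure.pi fun _ => volume from rfl]
    rw [Measure.pi_univ]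
    simp
  | succ N ih =>
    intro σ _ _ hcard m v hv hm hdep
    haveI : Nonempty σ := Fintype.card_pos_iff.mp (by omega)
    classical
    set M : σ := Finset.univ.max' Finset.univ_nonempty with hM
    have hMmax : ∀ j : σ, j ≤ M := fun j => Finset.le_max' _ _ (Finset.mem_univ j)
    set ext : ({x : σ // ¬ x = M} → ℝ) → (σ → ℝ) :=
      fun r j => if h : j = M then 0 else r ⟨j, h⟩ with hext
    have hextmeas : Measurable ext := by
      refine measurable_pi_lambda _ fun j => ?_
      by_cases h : j = M
      · simp only [hext, h, dif_pos]
        exact measurable_const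
      · simp only [hext, dif_neg h]
        exact measurable_pi_apply _
    set F : (σ → ℝ) → ENNReal :=
      fun w => ENNReal.ofReal (∏ j, gauss1 (m j w) (v j) (w j)) with hF
    have hFmeas : Measurable F := by
      refine ENNReal.measurable_ofReal.comp (Finset.measurable_prod _ fun j _ => ?_)
      exact measurable_gauss1 (hm j) (measurable_pi_apply j) (v j)
    haveI : Unique {x : σ // x = M} := ⟨⟨⟨M, rfl⟩⟩, fun a => Subtype.ext a.2⟩
    set T := MeasurableEquiv.piEquivPiSubtypeProd (fun _ : σ => ℝ) (fun x => x = M) with hT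
    have hTmp : MeasurePreserving T volume volume :=
      volume_preserving_piEquivPiSubtypeProd (fun _ : σ => ℝ) (fun x => x = M)
    have hpt : ∀ (u : {x : σ // x = M} → ℝ) (r : {x : σ // ¬ x = M} → ℝ),
        F (T.symm (u, r)) =
          ENNReal.ofReal (gauss1 (m M (ext r)) (v M) (u ⟨M, rfl⟩)) *
          ENNReal.ofReal (∏ j ∈ Finset.univ.erase M, gauss1 (m j (ext r)) (v j) (ext r j)) := by
      intro u r
      set w : σ → ℝ := T.symm (u, r) with hw
      have hwj : ∀ j (h : ¬ j = M), w j = r ⟨j, h⟩ := by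
        intro j h
        simp only [hw, hT, MeasurableEquiv.piEquivPiSubtypeProd_symm_apply, dif_neg h]
      have hwM : w M = u ⟨M, rfl⟩ := by
        simp only [hw, hT, MeasurableEquiv.piEquivPiSubtypeProd_symm_apply, dif_pos]
      have hwext : ∀ j, m j w = m j (ext r) := by
        intro j
        refine hdep j _ _ fun k hk => ?_
        have hkM : ¬ k = M := fun h => absurd hk (by rw [h]; exact not_lt.mpr (hMmax j))
        rw [hwj k hkM]
        simp only [hext, dif_neg hkM]
      have hsplit : (∏ j, gauss1 (m j w) (v j) (w j)) =
          gauss1 (m M (ext r)) (v M) (u ⟨M, rfl⟩) *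
            ∏ j ∈ Finset.univ.erase M, gauss1 (m j (ext r)) (v j) (ext r j) := by
        rw [← Finset.mul_prod_erase Finset.univ _ (Finset.mem_univ M)]
        congr 1
        · rw [hwext M, hwM]
        · refine Finset.prod_congr rfl fun j hj => ?_
          have hjM : ¬ j = M := (Finset.mem_erase.mp hj).1
          rw [hwext j, hwj j hjM]
          simp only [hext, dif_neg hjM]
      simp only [hF]
      rw [hsplit, ENNReal.ofReal_mul (gauss1_nonneg _ _ _)]
    have step1 : ∫⁻ w : σ → ℝ, F w = ∫⁻ p : ({x : σ // x = M} → ℝ) × ({x : σ // ¬ x = M} → ℝ),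
        F (T.symm p) := by
      exact ((hTmp.symm T).lintegral_comp hFmeas).symm
    rw [step1, Measure.volume_eq_prod,
      lintegral_prod_symm (fun p => F (T.symm p))
        (hFmeas.comp T.symm.measurable).aemeasurable]
    have hinner : ∀ r : {x : σ // ¬ x = M} → ℝ,
        ∫⁻ u : {x : σ // x = M} → ℝ, F (T.symm (u, r)) =
          ENNReal.ofReal (∏ j ∈ Finset.univ.erase M, gauss1 (m j (ext r)) (v j) (ext r j)) := by
      intro r
      simp_rw [hpt _ r]
      have hg1 : Measurable fun u : {x : σ // x = M} → ℝ =>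
          ENNReal.ofReal (gauss1 (m M (ext r)) (v M) (u ⟨M, rfl⟩)) :=
        ENNReal.measurable_ofReal.comp
          (measurable_gauss1 measurable_const (measurable_pi_apply _) (v M))
      rw [lintegral_mul_const _ hg1]
      have h1 : ∫⁻ u : {x : σ // x = M} → ℝ,
          ENNReal.ofReal (gauss1 (m M (ext r)) (v M) (u ⟨M, rfl⟩)) = 1 := by
        have := (volume_preserving_funUnique {x : σ // x = M} ℝ).lintegral_comp
          (f := fun t => ENNReal.ofReal (gauss1 (m M (ext r)) (v M) t))
          (ENNReal.measurable_ofReal.comp (measurable_gauss1 measurable_const measurable_id (v M)))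
        rw [← lintegral_gauss1 (m M (ext r)) (hv M)]
        convert this using 2
        · congr 1
        · congr 1
          exact congrArg
            (fun i : Fintype {x : σ // x = M} =>
              @MeasureSpace.pi {x : σ // x = M} i (fun _ => ℝ) (fun _ => Real.measureSpace))
            (Subsingleton.elim _ _)
        · funext u
          have hd : (⟨M, rfl⟩ : {x : σ // x = M}) = default := Subsingleton.elim _ _
          rw [hd]
          rfl
      rw [h1, one_mul]
    simp_rw [hinner]
    have hcard' : Fintype.card {x : σ // ¬ x = M} = N := by
      have h1 : Fintype.card {x : σ // x = M} = 1 := Fintype.card_subtype_eq M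
      have h2 := Fintype.card_subtype_compl (fun x : σ => x = M)
      omega
    have hprod : ∀ r : {x : σ // ¬ x = M} → ℝ,
        (∏ j ∈ Finset.univ.erase M, gauss1 (m j (ext r)) (v j) (ext r j)) =
          ∏ j : {x : σ // ¬ x = M}, gauss1 (m j.1 (ext r)) (v j.1) (r j) := by
      intro r
      rw [Finset.prod_subtype (Finset.univ.erase M)
        (p := fun x : σ => ¬ x = M) (by simp) (fun j => gauss1 (m j (ext r)) (v j) (ext r j))]
      refine Finset.prod_congr rfl fun j _ => ?_
      congr 1
      simp only [hext, dif_neg j.2, Subtype.coe_eta]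
    simp_rw [hprod]
    exact ih {x : σ // ¬ x = M} hcard' (fun j r => m j.1 (ext r)) (fun j => v j.1)
      (fun j => hv j.1) (fun j => (hm j.1).comp hextmeas)
      (fun j w w' hww => hdep j.1 _ _ (fun k hk => by
        by_cases hkM : k = M
        · exact absurd hk (by rw [hkM]; exact not_lt.mpr (hMmax j.1))
        · simp only [hext, dif_neg hkM]
          exact hww ⟨k, hkM⟩ hk))

lemma seq_integral (σ : Type) [Fintype σ] [LinearOrder σ]
    (m : σ → (σ → ℝ) → ℝ) (v : σ → ℝ) (hv : ∀ j, 0 < v j)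
    (hm : ∀ j, Measurable (m j))
    (hdep : ∀ j (w w' : σ → ℝ), (∀ k, k < j → w k = w' k) → m j w = m j w') :
    ∫ w : σ → ℝ, ∏ j, gauss1 (m j w) (v j) (w j) = 1 := by
  have hmeas : Measurable fun w : σ → ℝ => ∏ j, gauss1 (m j w) (v j) (w j) :=
    Finset.measurable_prod _ fun j _ => measurable_gauss1 (hm j) (measurable_pi_apply j) (v j)
  rw [integral_eq_lintegral_of_nonneg_ae
    (ae_of_all _ fun w => Finset.prod_nonneg fun j _ => gauss1_nonneg _ _ _)
    hmeas.aestronglyMeasurable]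
  rw [seq_lintegral (Fintype.card σ) σ rfl m v hv hm hdep]
  simp


/-! ### The latent model, Vecchia vector `x = (z_o, y_o, y_p)`

`Sum.inl j` (for `j : ↥o`) indexes the observed response `z j`, and `Sum.inr i`
(for `i : Fin n`) indexes the latent variable `y i`; the latent block is split into `y_o`
(indices in `o`) and `y_p` (indices in `p = oᶜ`). -/

/-- Covariance matrix of `x = (z_o, y)` for the latent model `y ~ N(0,K)`, `z = y + ε`,
`ε ~ N(0,D)` independent of `y`. -/
def rfCov {n : ℕ} (K D : Matrix (Fin n) (Fin n) ℝ) (o : Finset (Fin n)) :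
    Matrix (↥o ⊕ Fin n) (↥o ⊕ Fin n) ℝ :=
  Matrix.fromBlocks
    (Matrix.of fun j k => (K + D) j.1 k.1)
    (Matrix.of fun j i => K j.1 i)
    (Matrix.of fun i j => K i j.1)
    K

/-- The Vecchia approximation `f̃` of the reduced vector `(z_o, y_p)` (with `y_o` removed),
with the same conditioning sets: the product of the conditional densities of the
`z_o`-variables and of the `y_p`-variables. -/
def vecchiaReduced {n : ℕ} (K D : Matrix (Fin n) (Fin n) ℝ) (o : Finset (Fin n))
    (g : ↥o ⊕ Fin n → Finset (↥o ⊕ Fin n)) (x : ↥o ⊕ Fin n → ℝ) : ℝ :=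
  (∏ j : ↥o, condDens 0 (rfCov K D o) (Sum.inl j) (g (Sum.inl j)) x) *
    ∏ i ∈ oᶜ, condDens 0 (rfCov K D o) (Sum.inr i) (g (Sum.inr i)) x


lemma rfCov_posDef {n : ℕ} {K D : Matrix (Fin n) (Fin n) ℝ}
    (hK : K.PosDef) (hDdiag : ∀ i j, i ≠ j → D i j = 0) (hDpos : ∀ i, 0 < D i i)
    (o : Finset (Fin n)) : (rfCov K D o).PosDef := by
  classical
  haveI : Invertible K := hK.isUnit.invertible
  set A : Matrix (↥o) (↥o) ℝ := Matrix.of fun j k => (K + D) j.1 k.1 with hA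
  set B : Matrix (↥o) (Fin n) ℝ := K.submatrix Subtype.val id with hB
  have hBH : Bᴴ = K.submatrix id Subtype.val := by
    rw [hB, Matrix.conjTranspose_submatrix]
    congr 1
    ext a b
    simp [Matrix.conjTranspose_apply, sym_of_posDef hK]
  have hblock : rfCov K D o = Matrix.fromBlocks A B Bᴴ K := by
    rw [hBH]
    rfl
  have hSchur : A - B * K⁻¹ * Bᴴ = Matrix.diagonal (fun j : ↥o => D j.1 j.1) := by
    rw [hBH, hB]
    rw [show (K.submatrix (Subtype.val : ↥o → Fin n) id : Matrix (↥o) (Fin n) ℝ)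
        = K.submatrix Subtype.val (id : Fin n → Fin n) from rfl]
    rw [← Matrix.submatrix_id_id K⁻¹,
      ← Matrix.submatrix_mul K K⁻¹ Subtype.val id id Function.bijective_id,
      ← Matrix.submatrix_mul (K * K⁻¹) K Subtype.val id Subtype.val Function.bijective_id,
      Matrix.mul_nonsing_inv K hK.det_pos.ne'.isUnit, Matrix.one_mul]
    ext j k
    by_cases h : j = k
    · subst h; simp [hA, Matrix.diagonal]
    · have : j.1 ≠ k.1 := fun hh => h (Subtype.ext hh)
      simp [hA, Matrix.diagonal, h, hDdiag _ _ this, Matrix.submatrix_apply]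
  have hDoo : (Matrix.diagonal (fun j : ↥o => D j.1 j.1)).PosDef :=
    Matrix.PosDef.diagonal (fun j => (hDpos j.1))
  rw [hblock]
  refine Matrix.PosDef.of_dotProduct_mulVec_pos ?_ ?_
  · refine Matrix.IsHermitian.fromBlocks ?_ rfl hK.1
    show Aᴴ = A
    ext j k
    simp only [Matrix.conjTranspose_apply, hA, Matrix.of_apply, star_trivial, Matrix.add_apply]
    by_cases h : j = k
    · subst h; rfl
    · have hne : k.1 ≠ j.1 := fun hh => h (Subtype.ext hh).symm
      have hne' : j.1 ≠ k.1 := fun hh => h (Subtype.ext hh)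
      rw [sym_of_posDef hK, hDdiag _ _ hne, hDdiag _ _ hne']
  · intro z hz
    rw [← Sum.elim_comp_inl_inr z] at hz ⊢
    rw [dotProduct_mulVec,
      Matrix.schur_complement_eq₂₂ A B (z ∘ Sum.inl) (z ∘ Sum.inr) hK.1, hSchur]
    by_cases hx : z ∘ Sum.inl = 0
    · have hy : z ∘ Sum.inr ≠ 0 := by
        intro hy; apply hz; ext (a | a)
        · exact congrFun hx a
        · exact congrFun hy a
      have hvec : (K⁻¹ * Bᴴ) *ᵥ (z ∘ Sum.inl) + z ∘ Sum.inr ≠ 0 := by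
        rw [hx, Matrix.mulVec_zero, zero_add]; exact hy
      have h1 := hK.dotProduct_mulVec_pos hvec
      have h2 := hDoo.posSemidef.dotProduct_mulVec_nonneg (z ∘ Sum.inl)
      rw [dotProduct_mulVec] at h1 h2
      exact add_pos_of_pos_of_nonneg h1 h2
    · have h1 := hK.posSemidef.dotProduct_mulVec_nonneg ((K⁻¹ * Bᴴ) *ᵥ (z ∘ Sum.inl) + z ∘ Sum.inr)
      have h2 := hDoo.dotProduct_mulVec_pos hx
      rw [dotProduct_mulVec] at h1 h2
      exact add_pos_of_nonneg_of_pos h1 h2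


set_option maxHeartbeats 2000000 in
/-- **Marginalizing `y_o` out of an RF-stand/RF-ind–type Vecchia approximation.**
If no `y_p`-variable conditions on a `y_o`-variable and no `z_o`- or `y_o`-variable
conditions on a `y_p`-variable, then `∫ f̂(x) dy_o = f̃(z_o, y_p)`, the Vecchia approximation
of the reduced vector `(z_o, y_p)` with the same conditioning sets (in particular the
right-hand side does not depend on the `y_o`-coordinates of its argument); consequently the
implied conditionals satisfy `f̂(y_p | z_o) = f̃(y_p | z_o)`. -/
theorem vecchia_marginalize_latent_observed
    {n : ℕ} (K D : Matrix (Fin n) (Fin n) ℝ)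
    (hK : K.PosDef) (hDdiag : ∀ i j, i ≠ j → D i j = 0) (hDpos : ∀ i, 0 < D i i)
    (o : Finset (Fin n))
    (g : ↥o ⊕ Fin n → Finset (↥o ⊕ Fin n))
    -- `x`-ordering: each `z j` conditions only on previously ordered responses
    (hzc : ∀ j : ↥o, ∀ w ∈ g (Sum.inl j), ∃ k : ↥o, w = Sum.inl k ∧ k.1 < j.1)
    -- each `y i`, `i ∈ o`, conditions on responses and earlier `y_o`-variables
    -- (in particular not on any `y_p`-variable)
    (hyo : ∀ i : Fin n, i ∈ o → ∀ w ∈ g (Sum.inr i),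
      (∃ k, w = Sum.inl k) ∨ ∃ j, w = Sum.inr j ∧ j ∈ o ∧ j < i)
    -- each `y i`, `i ∈ p`, conditions on responses and earlier `y_p`-variables
    -- (in particular not on any `y_o`-variable)
    (hyp : ∀ i : Fin n, i ∉ o → ∀ w ∈ g (Sum.inr i),
      (∃ k, w = Sum.inl k) ∨ ∃ j, w = Sum.inr j ∧ j ∉ o ∧ j < i) :
    (∀ (zv : ↥o → ℝ) (yv yv' : Fin n → ℝ), (∀ i, i ∉ o → yv i = yv' i) →
        (∫ w : ↥o → ℝ,
            vecchia 0 (rfCov K D o) g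
              (Sum.elim zv fun i => if h : i ∈ o then w ⟨i, h⟩ else yv i)) =
          vecchiaReduced K D o g (Sum.elim zv yv')) ∧
      ∀ (zv : ↥o → ℝ) (yv : Fin n → ℝ),
        (∫ w : ↥o → ℝ,
            vecchia 0 (rfCov K D o) g
              (Sum.elim zv fun i => if h : i ∈ o then w ⟨i, h⟩ else yv i)) /
            (∫ yw : Fin n → ℝ, vecchia 0 (rfCov K D o) g (Sum.elim zv yw)) =
          vecchiaReduced K D o g (Sum.elim zv yv) /
            ∫ v : ↥(oᶜ) → ℝ,
              vecchiaReduced K D o g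
                (Sum.elim zv fun i => if h : i ∈ oᶜ then v ⟨i, h⟩ else yv i) := by
  classical
  set κ := rfCov K D o with hκdef
  have hκ : κ.PosDef := rfCov_posDef hK hDdiag hDpos o
  -- factors of `z`-type depend only on the `z`-coordinates
  have zfact : ∀ (zv : ↥o → ℝ) (y1 y2 : Fin n → ℝ) (j : ↥o),
      condDens 0 κ (Sum.inl j) (g (Sum.inl j)) (Sum.elim zv y1) =
        condDens 0 κ (Sum.inl j) (g (Sum.inl j)) (Sum.elim zv y2) := by
    intro zv y1 y2 j
    refine condDens_congr _ _ _ _ (fun u hu => ?_) rfl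
    obtain ⟨k, rfl, -⟩ := hzc j u hu
    rfl
  have yofact : ∀ (zv : ↥o → ℝ) (y1 y2 : Fin n → ℝ) (i : Fin n), i ∈ o →
      (∀ k, k ∈ o → y1 k = y2 k) →
      condDens 0 κ (Sum.inr i) (g (Sum.inr i)) (Sum.elim zv y1) =
        condDens 0 κ (Sum.inr i) (g (Sum.inr i)) (Sum.elim zv y2) := by
    intro zv y1 y2 i hi h12
    refine condDens_congr _ _ _ _ (fun u hu => ?_) (h12 i hi)
    rcases hyo i hi u hu with ⟨k, rfl⟩ | ⟨k, rfl, hk, -⟩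
    · rfl
    · exact h12 k hk
  have ypfact : ∀ (zv : ↥o → ℝ) (y1 y2 : Fin n → ℝ) (i : Fin n), i ∉ o →
      (∀ k, k ∉ o → y1 k = y2 k) →
      condDens 0 κ (Sum.inr i) (g (Sum.inr i)) (Sum.elim zv y1) =
        condDens 0 κ (Sum.inr i) (g (Sum.inr i)) (Sum.elim zv y2) := by
    intro zv y1 y2 i hi h12
    refine condDens_congr _ _ _ _ (fun u hu => ?_) (h12 i hi)
    rcases hyp i hi u hu with ⟨k, rfl⟩ | ⟨k, rfl, hk, -⟩
    · rfl
    · exact h12 k hk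
  have hnotmem : ∀ i : Fin n, Sum.inr i ∉ g (Sum.inr i) := by
    intro i hmem
    by_cases hi : i ∈ o
    · rcases hyo i hi _ hmem with ⟨k, hk⟩ | ⟨j, hj, -, hlt⟩
      · exact absurd hk (by simp)
      · obtain rfl : i = j := Sum.inr_injective hj
        exact lt_irrefl i hlt
    · rcases hyp i hi _ hmem with ⟨k, hk⟩ | ⟨j, hj, -, hlt⟩
      · exact absurd hk (by simp)
      · obtain rfl : i = j := Sum.inr_injective hj
        exact lt_irrefl i hlt
  -- the central fact: the `y_o` block integrates to one
  have intBo : ∀ (zv : ↥o → ℝ) (yv : Fin n → ℝ),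
      (∫ w : ↥o → ℝ, ∏ i ∈ o, condDens 0 κ (Sum.inr i) (g (Sum.inr i))
        (Sum.elim zv fun k => if h : k ∈ o then w ⟨k, h⟩ else yv k)) = 1 := by
    intro zv yv
    have hXmeas : Measurable fun w : ↥o → ℝ =>
        (Sum.elim zv fun k => if h : k ∈ o then w ⟨k, h⟩ else yv k : ↥o ⊕ Fin n → ℝ) := by
      refine measurable_pi_lambda _ fun c => ?_
      cases c with
      | inl j => exact measurable_const
      | inr k =>
        by_cases h : k ∈ o
        · simp only [Sum.elim_inr, dif_pos h]
          exact measurable_pi_apply _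
        · simp only [Sum.elim_inr, dif_neg h]
          exact measurable_const
    have key := seq_integral (↥o)
      (fun j w => condMean 0 κ (Sum.inr j.1) (g (Sum.inr j.1))
        (Sum.elim zv fun k => if h : k ∈ o then w ⟨k, h⟩ else yv k))
      (fun j => condVar κ (Sum.inr j.1) (g (Sum.inr j.1)))
      (fun j => condVar_pos hκ (hnotmem j.1))
      (fun j => measurable_condMean_comp _ _ _ _ hXmeas)
      (fun j w w' hww => condMean_congr _ _ _ _ (fun u hu => by
        rcases hyo j.1 j.2 u hu with ⟨k, rfl⟩ | ⟨k, rfl, hk, hlt⟩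
        · rfl
        · simp only [Sum.elim_inr, dif_pos hk]
          exact hww ⟨k, hk⟩ (Subtype.mk_lt_mk.mpr hlt)))
    have hint : ∀ w : ↥o → ℝ,
        (∏ i ∈ o, condDens 0 κ (Sum.inr i) (g (Sum.inr i))
          (Sum.elim zv fun k => if h : k ∈ o then w ⟨k, h⟩ else yv k)) =
        ∏ j : ↥o, gauss1
          (condMean 0 κ (Sum.inr j.1) (g (Sum.inr j.1))
            (Sum.elim zv fun k => if h : k ∈ o then w ⟨k, h⟩ else yv k))
          (condVar κ (Sum.inr j.1) (g (Sum.inr j.1))) (w j) := by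
      intro w
      rw [← Finset.prod_coe_sort o (fun i => condDens 0 κ (Sum.inr i) (g (Sum.inr i))
        (Sum.elim zv fun k => if h : k ∈ o then w ⟨k, h⟩ else yv k))]
      refine Finset.prod_congr rfl fun j _ => ?_
      unfold condDens
      congr 1
      simp only [Sum.elim_inr, dif_pos j.2, Subtype.coe_eta]
    simp_rw [hint]
    exact key
  -- part 1
  have part1 : ∀ (zv : ↥o → ℝ) (yv yv' : Fin n → ℝ), (∀ i, i ∉ o → yv i = yv' i) →
      (∫ w : ↥o → ℝ, vecchia 0 κ g
          (Sum.elim zv fun i => if h : i ∈ o then w ⟨i, h⟩ else yv i)) =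
        vecchiaReduced K D o g (Sum.elim zv yv') := by
    intro zv yv yv' hyy
    have hpt : ∀ w : ↥o → ℝ,
        vecchia 0 κ g (Sum.elim zv fun i => if h : i ∈ o then w ⟨i, h⟩ else yv i) =
          vecchiaReduced K D o g (Sum.elim zv yv') *
            ∏ i ∈ o, condDens 0 κ (Sum.inr i) (g (Sum.inr i))
              (Sum.elim zv fun k => if h : k ∈ o then w ⟨k, h⟩ else yv k) := by
      intro w
      unfold vecchia vecchiaReduced
      rw [Fintype.prod_sum_type]
      rw [← Finset.prod_mul_prod_compl o (fun i => condDens 0 κ (Sum.inr i) (g (Sum.inr i))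
        (Sum.elim zv fun k => if h : k ∈ o then w ⟨k, h⟩ else yv k))]
      rw [Finset.prod_congr rfl (fun i (hi : i ∈ oᶜ) =>
        ypfact zv _ yv' i (Finset.mem_compl.mp hi)
          (fun k hk => by simp only [dif_neg hk]; exact hyy k hk))]
      rw [Finset.prod_congr (rfl : (Finset.univ : Finset ↥o) = Finset.univ)
        (fun j _ => zfact zv _ yv' j)]
      rw [← hκdef]
      ring
    simp only [hpt]
    rw [MeasureTheory.integral_const_mul, intBo zv yv, mul_one]
  refine ⟨part1, ?_⟩
  intro zv yv
  rw [part1 zv yv yv (fun _ _ => rfl)]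
  -- notation for the two denominator pieces
  set Az : ℝ := ∏ j : ↥o, condDens 0 κ (Sum.inl j) (g (Sum.inl j)) (Sum.elim zv yv) with hAz
  set Cf : ({i : Fin n // ¬ i ∈ o} → ℝ) → ℝ := fun r =>
    ∏ i ∈ oᶜ, condDens 0 κ (Sum.inr i) (g (Sum.inr i))
      (Sum.elim zv fun k => if h : k ∈ o then (0 : ℝ) else r ⟨k, h⟩) with hCf
  set Ic : ℝ := ∫ r : {i : Fin n // ¬ i ∈ o} → ℝ, Cf r with hIc
  -- the full denominator
  have den1 : (∫ yw : Fin n → ℝ, vecchia 0 κ g (Sum.elim zv yw)) = Az * Ic := by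
    have hpt2 : ∀ yw : Fin n → ℝ, vecchia 0 κ g (Sum.elim zv yw) =
        Az * ((∏ i ∈ o, condDens 0 κ (Sum.inr i) (g (Sum.inr i)) (Sum.elim zv yw)) *
          ∏ i ∈ oᶜ, condDens 0 κ (Sum.inr i) (g (Sum.inr i)) (Sum.elim zv yw)) := by
      intro yw
      unfold vecchia
      rw [Fintype.prod_sum_type]
      rw [← Finset.prod_mul_prod_compl o (fun i => condDens 0 κ (Sum.inr i) (g (Sum.inr i))
        (Sum.elim zv yw))]
      rw [Finset.prod_congr (rfl : (Finset.univ : Finset ↥o) = Finset.univ)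
        (fun j _ => zfact zv yw yv j)]
    simp only [hpt2]
    rw [MeasureTheory.integral_const_mul]
    congr 1
    -- split the integral over `y` into the `o` and `oᶜ` parts
    set T2 := MeasurableEquiv.piEquivPiSubtypeProd (fun _ : Fin n => ℝ) (fun i => i ∈ o) with hT2
    have hT2mp : MeasurePreserving T2 volume volume := by
      have h := volume_preserving_piEquivPiSubtypeProd (fun _ : Fin n => ℝ) (fun i => i ∈ o)
      have hpi : (Subtype.fintype fun i : Fin n => i ∈ o) = Finset.Subtype.fintype o :=
        Subsingleton.elim _ _
      rwa [hpi] at h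
    have hcomp := (hT2mp.symm T2).integral_comp T2.symm.measurableEmbedding
      (fun yw : Fin n → ℝ =>
        (∏ i ∈ o, condDens 0 κ (Sum.inr i) (g (Sum.inr i)) (Sum.elim zv yw)) *
          ∏ i ∈ oᶜ, condDens 0 κ (Sum.inr i) (g (Sum.inr i)) (Sum.elim zv yw))
    rw [← hcomp]
    have hsplit : ∀ p : ({i : Fin n // i ∈ o} → ℝ) × ({i : Fin n // ¬ i ∈ o} → ℝ),
        ((∏ i ∈ o, condDens 0 κ (Sum.inr i) (g (Sum.inr i)) (Sum.elim zv (T2.symm p))) *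
          ∏ i ∈ oᶜ, condDens 0 κ (Sum.inr i) (g (Sum.inr i)) (Sum.elim zv (T2.symm p))) =
        (∏ i ∈ o, condDens 0 κ (Sum.inr i) (g (Sum.inr i))
          (Sum.elim zv fun k => if h : k ∈ o then p.1 ⟨k, h⟩ else (0 : Fin n → ℝ) k)) *
          Cf p.2 := by
      intro p
      have hco : ∀ k (h : k ∈ o), (T2.symm p) k = p.1 ⟨k, h⟩ := by
        intro k h
        simp only [hT2, MeasurableEquiv.piEquivPiSubtypeProd_symm_apply, dif_pos h]
      have hcc : ∀ k (h : ¬ k ∈ o), (T2.symm p) k = p.2 ⟨k, h⟩ := by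
        intro k h
        simp only [hT2, MeasurableEquiv.piEquivPiSubtypeProd_symm_apply, dif_neg h]
      congr 1
      · refine Finset.prod_congr rfl fun i hi => ?_
        refine yofact zv _ _ i hi (fun k hk => ?_)
        rw [hco k hk]
        simp only [dif_pos hk]
      · rw [hCf]
        refine Finset.prod_congr rfl fun i hi => ?_
        refine ypfact zv _ _ i (Finset.mem_compl.mp hi) (fun k hk => ?_)
        rw [hcc k hk]
        simp only [dif_neg hk]
    simp only [hsplit]
    rw [Measure.volume_eq_prod, MeasureTheory.integral_prod_mul
      (fun u : {i : Fin n // i ∈ o} → ℝ => ∏ i ∈ o, condDens 0 κ (Sum.inr i) (g (Sum.inr i))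
        (Sum.elim zv fun k => if h : k ∈ o then u ⟨k, h⟩ else (0 : Fin n → ℝ) k)) Cf]
    rw [intBo zv 0, one_mul]
  -- the reduced denominator
  have den2 : (∫ v : ↥(oᶜ) → ℝ, vecchiaReduced K D o g
      (Sum.elim zv fun i => if h : i ∈ oᶜ then v ⟨i, h⟩ else yv i)) = Az * Ic := by
    have hpt3 : ∀ v : ↥(oᶜ) → ℝ, vecchiaReduced K D o g
        (Sum.elim zv fun i => if h : i ∈ oᶜ then v ⟨i, h⟩ else yv i) =
          Az * ∏ i ∈ oᶜ, condDens 0 κ (Sum.inr i) (g (Sum.inr i))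
            (Sum.elim zv fun k => if h : k ∈ oᶜ then v ⟨k, h⟩ else yv k) := by
      intro v
      unfold vecchiaReduced
      rw [← hκdef]
      rw [Finset.prod_congr (rfl : (Finset.univ : Finset ↥o) = Finset.univ)
        (fun j _ => zfact zv _ yv j)]
    simp only [hpt3]
    rw [MeasureTheory.integral_const_mul]
    congr 1
    -- transport the integral along the equivalence of index subtypes
    set e : {i : Fin n // ¬ i ∈ o} ≃ {i : Fin n // i ∈ oᶜ} :=
      Equiv.subtypeEquivRight (fun i => (Finset.mem_compl (s := o) (a := i)).symm) with he
    have hTc := volume_measurePreserving_piCongrLeft (fun _ : {i : Fin n // i ∈ oᶜ} => ℝ) e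
    have hcomp2 := hTc.integral_comp
      (MeasurableEquiv.piCongrLeft (fun _ => ℝ) e).measurableEmbedding
      (fun v : ↥(oᶜ) → ℝ =>
        ∏ i ∈ oᶜ, condDens 0 κ (Sum.inr i) (g (Sum.inr i))
          (Sum.elim zv fun k => if h : k ∈ oᶜ then v ⟨k, h⟩ else yv k))
    rw [← hcomp2, hIc]
    refine integral_congr_ae (Filter.Eventually.of_forall fun r => ?_)
    have happ : ∀ (b : {i : Fin n // i ∈ oᶜ}),
        (MeasurableEquiv.piCongrLeft (fun _ : {i : Fin n // i ∈ oᶜ} => ℝ) e) r b =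
          r (e.symm b) := by
      intro b
      conv_lhs => rw [← e.apply_symm_apply b]
      rw [MeasurableEquiv.piCongrLeft_apply_apply]
    rw [hCf]
    refine Finset.prod_congr rfl fun i hi => ?_
    refine ypfact zv _ _ i (Finset.mem_compl.mp hi) (fun k hk => ?_)
    have hk' : k ∈ oᶜ := Finset.mem_compl.mpr hk
    simp only [dif_pos hk', dif_neg hk]
    rw [happ ⟨k, hk'⟩]
    congr 1
  rw [den1, den2]

end
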